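/- Let Ω ⊂ ℝⁿ be a bounded open set, let 2 < m < 3, and let u₀ : closure(Ω) → ℝ be continuous with u₀ ≥ 0 and u₀ not identically zero. Then there exists a C^∞ function u̲₀ : Ω → ℝ such that: u̲₀ is not identically zero; 0 ≤ u̲₀(x) ≤ min{u₀(x), 1} for all x ∈ Ω; the support of u̲₀ is a compact subset of Ω; and u̲₀(x)^{3−m} ≥ (m−1) Δ u̲₀(x) for all x ∈ Ω. -/

import Mathlib

open Set Filter

/-- The Laplacian of `f : ℝⁿ → ℝ` at `x`: the sum of the second partial
derivatives in the coordinate directions. -/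
noncomputable def laplacian {n : ℕ} (f : EuclideanSpace ℝ (Fin n) → ℝ)
    (x : EuclideanSpace ℝ (Fin n)) : ℝ :=
  ∑ i : Fin n, iteratedFDeriv ℝ 2 f x ![EuclideanSpace.single i 1, EuclideanSpace.single i 1]

namespace ISubAux

noncomputable def D1 (t : ℝ) : ℝ := expNegInvGlue t / t ^ 2
noncomputable def D2 (t : ℝ) : ℝ := expNegInvGlue t / t ^ 4 - 2 * expNegInvGlue t / t ^ 3

lemma expNegInvGlue_of_pos {t : ℝ} (ht : 0 < t) : expNegInvGlue t = Real.exp (-t⁻¹) := by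
  simp [expNegInvGlue, not_le.2 ht]

lemma eventually_eq_exp {t : ℝ} (ht : 0 < t) :
    expNegInvGlue =ᶠ[nhds t] fun u => Real.exp (-u⁻¹) := by
  filter_upwards [lt_mem_nhds ht] with u hu
  exact expNegInvGlue_of_pos hu

lemma hasDerivAt_expNegInvGlue {t : ℝ} (ht : 0 < t) :
    HasDerivAt expNegInvGlue (D1 t) t := by
  have h1 : HasDerivAt (fun u : ℝ => Real.exp (-u⁻¹))
      (Real.exp (-t⁻¹) * (-(-(t ^ 2)⁻¹))) t := ((hasDerivAt_inv (ne_of_gt ht)).neg).exp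
  have h2 : Real.exp (-t⁻¹) * (-(-(t ^ 2)⁻¹)) = D1 t := by
    rw [D1, expNegInvGlue_of_pos ht]; ring
  rw [h2] at h1
  exact h1.congr_of_eventuallyEq (eventually_eq_exp ht)

lemma hasDerivAt_D1 {t : ℝ} (ht : 0 < t) : HasDerivAt D1 (D2 t) t := by
  have h0 : (t : ℝ) ^ 2 ≠ 0 := pow_ne_zero _ (ne_of_gt ht)
  have h1 : HasDerivAt (fun u : ℝ => Real.exp (-u⁻¹) * ((u ^ 2)⁻¹))
      ((Real.exp (-t⁻¹) * (-(-(t ^ 2)⁻¹))) * (t ^ 2)⁻¹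
        + Real.exp (-t⁻¹) * (-(2 * t ^ 1) / (t ^ 2) ^ 2)) t := by
    exact (((hasDerivAt_inv (ne_of_gt ht)).neg).exp).mul
      ((hasDerivAt_pow 2 t).inv h0)
  have h2 : (Real.exp (-t⁻¹) * (-(-(t ^ 2)⁻¹))) * (t ^ 2)⁻¹
        + Real.exp (-t⁻¹) * (-(2 * t ^ 1) / (t ^ 2) ^ 2) = D2 t := by
    rw [D2, expNegInvGlue_of_pos ht]; field_simp; ring
  rw [h2] at h1
  apply h1.congr_of_eventuallyEq
  filter_upwards [lt_mem_nhds ht] with u hu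
  rw [D1, expNegInvGlue_of_pos hu, div_eq_mul_inv]

lemma expNegInvGlue_le_one (t : ℝ) : expNegInvGlue t ≤ 1 := by
  rcases le_or_gt t 0 with h | h
  · rw [expNegInvGlue.zero_of_nonpos h]; norm_num
  · rw [expNegInvGlue_of_pos h]
    exact Real.exp_le_one_iff.2 (neg_nonpos.2 (inv_nonneg.2 h.le))

/-- key scalar bound : exp (-a) ≤ 256 / a^4 for a > 0 -/
lemma exp_neg_le {a : ℝ} (ha : 0 < a) : Real.exp (-a) ≤ 256 / a ^ 4 := by
  have h1 : a / 4 ≤ Real.exp (a / 4) :=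
    le_trans (by linarith) (Real.add_one_le_exp _)
  have h2 : (a / 4) ^ 4 ≤ Real.exp (a / 4) ^ 4 :=
    pow_le_pow_left₀ (by positivity) h1 4
  have h3 : Real.exp (a / 4) ^ 4 = Real.exp a := by
    rw [← Real.exp_nat_mul]; norm_num; ring_nf
  rw [h3] at h2
  rw [Real.exp_neg]
  rw [div_eq_mul_inv]
  have h4 : (a / 4) ^ 4 = a ^ 4 / 256 := by ring
  rw [h4] at h2
  have h5 : (0:ℝ) < a ^ 4 / 256 := by positivity
  calc (Real.exp a)⁻¹ ≤ (a ^ 4 / 256)⁻¹ := by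
        exact inv_anti₀ h5 h2
    _ = 256 * (a ^ 4)⁻¹ := by field_simp

variable {n : ℕ}
local notation "E" => EuclideanSpace ℝ (Fin n)

lemma hasFDerivAt_q (x₀ x : E) :
    HasFDerivAt (fun y : E => ‖y - x₀‖ ^ 2) ((2:ℝ) • (innerSL ℝ (x - x₀))) x := by
  have hsub : HasFDerivAt (fun y : E => y - x₀) (ContinuousLinearMap.id ℝ E) x :=
    (hasFDerivAt_id x).sub_const x₀
  have h := hsub.inner ℝ hsub
  have heq : (fun y : E => (inner ℝ (y - x₀) (y - x₀) : ℝ)) = fun y : E => ‖y - x₀‖ ^ 2 := by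
    funext y; exact real_inner_self_eq_norm_sq _
  rw [heq] at h
  refine h.congr_fderiv ?_
  ext v
  simp only [ContinuousLinearMap.coe_comp', Function.comp_apply, ContinuousLinearMap.prod_apply,
    ContinuousLinearMap.id_apply, fderivInnerCLM_apply, ContinuousLinearMap.smul_apply,
    innerSL_apply_apply, smul_eq_mul]
  rw [real_inner_comm v]
  ring

lemma hasFDerivAt_S (x₀ x : E) :
    HasFDerivAt (fun y : E => -((2:ℝ) • (innerSL ℝ (y - x₀))))
      (-((2:ℝ) • (innerSL ℝ : E →L[ℝ] E →L[ℝ] ℝ))) x := by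
  have h0 := (((2:ℝ) • (innerSL ℝ : E →L[ℝ] E →L[ℝ] ℝ)).hasFDerivAt (x := x - x₀)).comp x
    ((hasFDerivAt_id x).sub_const x₀)
  rw [ContinuousLinearMap.comp_id] at h0
  exact h0.neg

lemma norm_sq_eq_sum (w : E) : ‖w‖ ^ 2 = ∑ i, (w i) ^ 2 := by
  rw [EuclideanSpace.norm_eq, Real.sq_sqrt (by positivity)]
  simp [sq_abs]

lemma lap_formula (x₀ : E) (r ε : ℝ) {x : E} (hx : ‖x - x₀‖ ^ 2 < r ^ 2) :
    laplacian (fun y : E => ε * expNegInvGlue (r ^ 2 - ‖y - x₀‖ ^ 2)) x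
      = ε * (4 * D2 (r ^ 2 - ‖x - x₀‖ ^ 2) * ‖x - x₀‖ ^ 2
          - 2 * n * D1 (r ^ 2 - ‖x - x₀‖ ^ 2)) := by
  set f : E → ℝ := fun y => ε * expNegInvGlue (r ^ 2 - ‖y - x₀‖ ^ 2) with hf
  have ht : 0 < r ^ 2 - ‖x - x₀‖ ^ 2 := by linarith
  set t : ℝ := r ^ 2 - ‖x - x₀‖ ^ 2 with htdef
  set U : Set E := {y | 0 < r ^ 2 - ‖y - x₀‖ ^ 2} with hUdef
  have hU : IsOpen U := by
    apply isOpen_lt continuous_const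
    exact continuous_const.sub (((continuous_id.sub continuous_const).norm).pow 2)
  have hxU : x ∈ U := ht
  set G1 : E → (E →L[ℝ] ℝ) :=
    fun y => (ε * D1 (r ^ 2 - ‖y - x₀‖ ^ 2)) • (-((2:ℝ) • innerSL ℝ (y - x₀))) with hG1
  have hsder : ∀ y : E, HasFDerivAt (fun z : E => r ^ 2 - ‖z - x₀‖ ^ 2)
      (-((2:ℝ) • innerSL ℝ (y - x₀))) y := fun y => (hasFDerivAt_q x₀ y).const_sub (r ^ 2)
  have step1 : ∀ y ∈ U, HasFDerivAt f (G1 y) y := by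
    intro y hy
    have hφ := (hasDerivAt_expNegInvGlue hy).const_mul ε
    have := hφ.comp_hasFDerivAt y (hsder y); exact this
  have step2 : fderiv ℝ f =ᶠ[nhds x] G1 := by
    filter_upwards [hU.mem_nhds hxU] with y hy
    exact (step1 y hy).fderiv
  have hc : HasFDerivAt (fun y : E => ε * D1 (r ^ 2 - ‖y - x₀‖ ^ 2))
      ((ε * D2 t) • (-((2:ℝ) • innerSL ℝ (x - x₀)))) x := by
    have hd := (hasDerivAt_D1 ht).const_mul ε
    have := hd.comp_hasFDerivAt x (hsder x); exact this
  have step3 := hc.smul (hasFDerivAt_S x₀ x)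
  have step4 : HasFDerivAt (fderiv ℝ f) _ x := step3.congr_of_eventuallyEq step2
  have step5 : ∀ v : E, iteratedFDeriv ℝ 2 f x ![v, v]
      = (ε * D1 t) * (-(2 * (inner ℝ v v : ℝ)))
        + ((ε * D2 t) * (2 * (inner ℝ (x - x₀) v : ℝ)))
          * (2 * (inner ℝ (x - x₀) v : ℝ)) := by
    intro v
    rw [iteratedFDeriv_two_apply, step4.fderiv]
    simp only [Matrix.cons_val_zero, Matrix.cons_val_one, Matrix.head_cons,
      ContinuousLinearMap.add_apply, ContinuousLinearMap.smul_apply,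
      ContinuousLinearMap.neg_apply, ContinuousLinearMap.smulRight_apply,
      innerSL_apply_apply, smul_eq_mul]
    erw [innerSL_apply_apply]
    ring
  unfold laplacian
  have step6 : ∀ i : Fin n, iteratedFDeriv ℝ 2 f x
        ![EuclideanSpace.single i 1, EuclideanSpace.single i 1]
      = 4 * (ε * D2 t) * ((x - x₀) i) ^ 2 - 2 * (ε * D1 t) := by
    intro i
    rw [step5]
    have h1 : (inner ℝ (EuclideanSpace.single i (1:ℝ)) (EuclideanSpace.single i (1:ℝ)) : ℝ) = 1 := by
      rw [real_inner_self_eq_norm_sq, EuclideanSpace.norm_single]; norm_num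
    have h2 : (inner ℝ (x - x₀) (EuclideanSpace.single i (1:ℝ)) : ℝ) = (x - x₀) i := by
      rw [EuclideanSpace.inner_single_right]; simp
    rw [h1, h2]
    ring
  calc (∑ i : Fin n, iteratedFDeriv ℝ 2 f x
        ![EuclideanSpace.single i 1, EuclideanSpace.single i 1])
      = ∑ i : Fin n, (4 * (ε * D2 t) * ((x - x₀) i) ^ 2 - 2 * (ε * D1 t)) := by
        exact Finset.sum_congr rfl fun i _ => step6 i
    _ = 4 * (ε * D2 t) * (∑ i : Fin n, ((x - x₀) i) ^ 2) - n * (2 * (ε * D1 t)) := by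
        rw [Finset.sum_sub_distrib, ← Finset.mul_sum, Finset.sum_const]
        simp [mul_comm]
    _ = ε * (4 * D2 t * ‖x - x₀‖ ^ 2 - 2 * n * D1 t) := by
        rw [← norm_sq_eq_sum]
        ring

lemma lap_neg (x₀ : E) (r ε : ℝ) {x : E} (hx : r ^ 2 - ‖x - x₀‖ ^ 2 < 0) :
    laplacian (fun y : E => ε * expNegInvGlue (r ^ 2 - ‖y - x₀‖ ^ 2)) x = 0 := by
  set f : E → ℝ := fun y => ε * expNegInvGlue (r ^ 2 - ‖y - x₀‖ ^ 2) with hf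
  set U : Set E := {y | r ^ 2 - ‖y - x₀‖ ^ 2 < 0} with hUdef
  have hU : IsOpen U := by
    apply isOpen_lt
    · exact continuous_const.sub (((continuous_id.sub continuous_const).norm).pow 2)
    · exact continuous_const
  have hxU : x ∈ U := hx
  have h1 : ∀ y ∈ U, fderiv ℝ f y = 0 := by
    intro y hy
    have hev : f =ᶠ[nhds y] fun _ => (0:ℝ) := by
      filter_upwards [hU.mem_nhds hy] with z hz
      simp [hf, expNegInvGlue.zero_of_nonpos (le_of_lt hz)]
    rw [hev.fderiv_eq, fderiv_fun_const]
    rfl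
  have h2 : fderiv ℝ f =ᶠ[nhds x] fun _ => (0 : E →L[ℝ] ℝ) := by
    filter_upwards [hU.mem_nhds hxU] with y hy
    exact h1 y hy
  have h3 : fderiv ℝ (fderiv ℝ f) x = 0 := by
    rw [h2.fderiv_eq]
    exact fderiv_const_apply _
  unfold laplacian
  apply Finset.sum_eq_zero
  intro i _
  rw [iteratedFDeriv_two_apply, h3]
  rfl

lemma dense_ne (x₀ : E) {r : ℝ} (hr : 0 < r) :
    Dense {y : E | r ^ 2 - ‖y - x₀‖ ^ 2 ≠ 0} := by
  intro x
  rw [Metric.mem_closure_iff]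
  intro δ hδ
  by_cases hx : r ^ 2 - ‖x - x₀‖ ^ 2 ≠ 0
  · exact ⟨x, hx, by simpa using hδ⟩
  · push_neg at hx
    have h2 : (‖x - x₀‖ - r) * (‖x - x₀‖ + r) = 0 := by linear_combination -hx
    have hnorm : ‖x - x₀‖ = r := by
      rcases mul_eq_zero.1 h2 with h | h
      · linarith
      · have := norm_nonneg (x - x₀); linarith
    set c : ℝ := δ / (2 * r) with hc
    have hc0 : 0 < c := by positivity
    refine ⟨x + c • (x - x₀), ?_, ?_⟩
    · have hyx : x + c • (x - x₀) - x₀ = (1 + c) • (x - x₀) := by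
        rw [add_smul, one_smul]; abel
      have hny : ‖x + c • (x - x₀) - x₀‖ = (1 + c) * r := by
        rw [hyx, norm_smul, Real.norm_of_nonneg (by linarith), hnorm]
      simp only [mem_setOf_eq, hny]
      intro habs
      nlinarith [mul_pos (mul_pos hc0 hr) hr, mul_pos (mul_pos hc0 hc0) (mul_pos hr hr)]
    · have : dist x (x + c • (x - x₀)) = c * r := by
        rw [dist_eq_norm]
        have : x - (x + c • (x - x₀)) = (-c) • (x - x₀) := by
          rw [neg_smul]; abel
        rw [this, norm_smul, Real.norm_of_nonpos (by linarith), hnorm]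
        ring
      rw [this]
      have hcr : c * r = δ / 2 := by
        rw [hc]; field_simp
      rw [hcr]
      linarith

lemma main_est (x₀ : E) {r ε m : ℝ} (hm2 : 2 < m) (hm3 : m < 3) (hr : 0 < r) (hε0 : 0 < ε)
    (hεK : ε ^ (m - 2) ≤ (m - 2) ^ 4 / (1024 * (m - 1) * r ^ 2)) {x : E}
    (hx : ‖x - x₀‖ ^ 2 < r ^ 2) :
    (m - 1) * laplacian (fun y : E => ε * expNegInvGlue (r ^ 2 - ‖y - x₀‖ ^ 2)) x
      ≤ (ε * expNegInvGlue (r ^ 2 - ‖x - x₀‖ ^ 2)) ^ (3 - m) := by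
  rw [lap_formula x₀ r ε hx]
  have hq0 : (0:ℝ) ≤ ‖x - x₀‖ ^ 2 := by positivity
  have ht : 0 < r ^ 2 - ‖x - x₀‖ ^ 2 := by linarith
  set q : ℝ := ‖x - x₀‖ ^ 2 with hqdef
  set t : ℝ := r ^ 2 - q with htdef
  have hqr : q ≤ r ^ 2 := by linarith
  have hhpos : 0 < expNegInvGlue t := expNegInvGlue.pos_of_pos ht
  set h : ℝ := expNegInvGlue t with hhdef
  have hm1 : 0 < m - 1 := by linarith
  have hm2' : 0 < m - 2 := by linarith
  have hD1 : 0 ≤ D1 t := by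
    rw [D1]; positivity
  -- Step A : bound the laplacian expression
  have hD2q : D2 t * q ≤ (h / t ^ 4) * r ^ 2 := by
    rcases le_or_gt (D2 t) 0 with hD | hD
    · exact le_trans (mul_nonpos_of_nonpos_of_nonneg hD hq0) (by positivity)
    · calc D2 t * q ≤ D2 t * r ^ 2 := mul_le_mul_of_nonneg_left hqr hD.le
        _ ≤ (h / t ^ 4) * r ^ 2 := by
            apply mul_le_mul_of_nonneg_right _ (by positivity)
            rw [D2, ← hhdef]
            have : 0 ≤ 2 * h / t ^ 3 := by positivity
            linarith
  have stepA : (m - 1) * (ε * (4 * D2 t * q - 2 * n * D1 t))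
      ≤ (m - 1) * ε * 4 * (h / t ^ 4) * r ^ 2 := by
    have h1 : 4 * ((m - 1) * ε) * (D2 t * q) ≤ 4 * ((m - 1) * ε) * ((h / t ^ 4) * r ^ 2) :=
      mul_le_mul_of_nonneg_left hD2q (by positivity)
    have h2 : 0 ≤ ((m - 1) * ε * 2 * n) * D1 t :=
      mul_nonneg (by positivity) hD1
    nlinarith [h1, h2]
  refine le_trans stepA ?_
  -- Step B : bound by the rpow
  have hεs : ε ^ (3 - m) * ε ^ (m - 2) = ε := by
    rw [← Real.rpow_add hε0, show (3 - m) + (m - 2) = 1 by ring, Real.rpow_one]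
  have hhs : h ^ (3 - m) * h ^ (m - 2) = h := by
    rw [← Real.rpow_add hhpos, show (3 - m) + (m - 2) = 1 by ring, Real.rpow_one]
  have hhm2 : h ^ (m - 2) ≤ 256 * t ^ 4 / (m - 2) ^ 4 := by
    rw [hhdef, expNegInvGlue_of_pos ht]
    rw [← Real.exp_mul]
    have harg : -t⁻¹ * (m - 2) = -((m - 2) / t) := by field_simp
    rw [harg]
    have := exp_neg_le (a := (m - 2) / t) (by positivity)
    calc Real.exp (-((m - 2) / t)) ≤ 256 / ((m - 2) / t) ^ 4 := this
      _ = 256 * t ^ 4 / (m - 2) ^ 4 := by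
          rw [div_pow]
          field_simp
  have key : (m - 1) * ε * 4 * (h / t ^ 4) * r ^ 2
      = (ε ^ (3 - m) * h ^ (3 - m))
        * ((m - 1) * 4 * r ^ 2 / t ^ 4 * (ε ^ (m - 2) * h ^ (m - 2))) := by
    have : (ε ^ (3 - m) * h ^ (3 - m))
        * ((m - 1) * 4 * r ^ 2 / t ^ 4 * (ε ^ (m - 2) * h ^ (m - 2)))
        = (ε ^ (3 - m) * ε ^ (m - 2)) * (h ^ (3 - m) * h ^ (m - 2))
          * ((m - 1) * 4 * r ^ 2 / t ^ 4) := by ring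
    rw [this, hεs, hhs]
    ring
  rw [Real.mul_rpow hε0.le hhpos.le, key]
  apply mul_le_of_le_one_right (by positivity)
  have hB : (m - 1) * 4 * r ^ 2 / t ^ 4 * (ε ^ (m - 2) * h ^ (m - 2))
      ≤ (m - 1) * 4 * r ^ 2 / t ^ 4
        * (((m - 2) ^ 4 / (1024 * (m - 1) * r ^ 2)) * (256 * t ^ 4 / (m - 2) ^ 4)) := by
    apply mul_le_mul_of_nonneg_left _ (by positivity)
    apply mul_le_mul hεK hhm2 (Real.rpow_nonneg hhpos.le _) (by positivity)
  refine le_trans hB (le_of_eq ?_)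
  have ht0 : t ≠ 0 := ne_of_gt ht
  have hm20 : m - 2 ≠ 0 := ne_of_gt hm2'
  have hm10 : m - 1 ≠ 0 := ne_of_gt hm1
  have hr0 : r ≠ 0 := ne_of_gt hr
  field_simp
  ring

end ISubAux

open ISubAux in
/-- Lemma 2.1, case `2 < m < 3`: given `u₀` continuous and nonnegative on
`closure Ω`, not identically zero, there is a smooth function `u̲₀`, not identically zero,
with `0 ≤ u̲₀ ≤ min {u₀, 1}` on `Ω`, compactly supported in `Ω`, satisfying
`u̲₀^{3−m} ≥ (m−1) Δ u̲₀` on `Ω`. -/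
theorem initial_subsolution_exists (n : ℕ) (Ω : Set (EuclideanSpace ℝ (Fin n)))
    (hΩo : IsOpen Ω) (hΩb : Bornology.IsBounded Ω)
    (m : ℝ) (hm2 : 2 < m) (hm3 : m < 3)
    (u₀ : EuclideanSpace ℝ (Fin n) → ℝ)
    (hu₀c : ContinuousOn u₀ (closure Ω))
    (hu₀nonneg : ∀ x ∈ closure Ω, 0 ≤ u₀ x)
    (hu₀ne : ∃ x ∈ closure Ω, u₀ x ≠ 0) :
    ∃ f : EuclideanSpace ℝ (Fin n) → ℝ,
      ContDiff ℝ (⊤ : ℕ∞) f ∧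
      (∃ x ∈ Ω, f x ≠ 0) ∧
      (∀ x ∈ Ω, 0 ≤ f x ∧ f x ≤ min (u₀ x) 1) ∧
      IsCompact (tsupport f) ∧ tsupport f ⊆ Ω ∧
      (∀ x ∈ Ω, (m - 1) * laplacian f x ≤ f x ^ (3 - m)) := by
  classical
  obtain ⟨z, hz, hz0⟩ := hu₀ne
  have hzpos : 0 < u₀ z := (hu₀nonneg z hz).lt_of_ne (Ne.symm hz0)
  set c : ℝ := u₀ z / 2 with hcdef
  have hc0 : 0 < c := by positivity
  have hcw : ContinuousWithinAt u₀ (closure Ω) z := hu₀c z hz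
  have hev : u₀ ⁻¹' (Set.Ioi c) ∈ nhdsWithin z (closure Ω) :=
    hcw (Ioi_mem_nhds (by rw [hcdef]; linarith))
  obtain ⟨V, hVopen, hzV, hVsub⟩ := mem_nhdsWithin.1 hev
  have hVΩ : (V ∩ Ω).Nonempty := _root_.mem_closure_iff.1 hz V hVopen hzV
  obtain ⟨x₀, hx₀V, hx₀Ω⟩ := hVΩ
  obtain ⟨r₀, hr₀, hball⟩ := Metric.isOpen_iff.1 (hVopen.inter hΩo) x₀ ⟨hx₀V, hx₀Ω⟩
  set r : ℝ := r₀ / 2 with hrdef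
  have hr : 0 < r := by positivity
  have hcb : Metric.closedBall x₀ r ⊆ V ∩ Ω :=
    subset_trans (Metric.closedBall_subset_ball (by rw [hrdef]; linarith)) hball
  have hu₀W : ∀ y ∈ Metric.closedBall x₀ r, c < u₀ y := by
    intro y hy
    exact hVsub ⟨(hcb hy).1, subset_closure (hcb hy).2⟩
  have hm1 : 0 < m - 1 := by linarith
  have hm2' : 0 < m - 2 := by linarith
  set A : ℝ := (m - 2) ^ 4 / (1024 * (m - 1) * r ^ 2) with hAdef
  have hA0 : 0 < A := by rw [hAdef]; positivity
  set ε₂ : ℝ := A ^ (1 / (m - 2)) with hε₂def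
  have hε₂0 : 0 < ε₂ := Real.rpow_pos_of_pos hA0 _
  set ε : ℝ := min (min c 1) ε₂ with hεdef
  have hε0 : 0 < ε := lt_min (lt_min hc0 one_pos) hε₂0
  have hεK : ε ^ (m - 2) ≤ A := by
    have h1 : ε ^ (m - 2) ≤ ε₂ ^ (m - 2) :=
      Real.rpow_le_rpow hε0.le (min_le_right _ _) hm2'.le
    have h2 : ε₂ ^ (m - 2) = A := by
      rw [hε₂def, ← Real.rpow_mul hA0.le, one_div,
        inv_mul_cancel₀ (ne_of_gt hm2'), Real.rpow_one]
    rw [h2] at h1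
    exact h1
  set f : EuclideanSpace ℝ (Fin n) → ℝ :=
    fun y => ε * expNegInvGlue (r ^ 2 - ‖y - x₀‖ ^ 2) with hfdef
  have hfC : ContDiff ℝ (⊤ : ℕ∞) f := by
    apply contDiff_const.mul
    apply expNegInvGlue.contDiff.comp
    exact contDiff_const.sub (ContDiff.norm_sq (𝕜 := ℝ) (contDiff_id.sub contDiff_const))
  have hfnonneg : ∀ y, 0 ≤ f y := fun y => mul_nonneg hε0.le (expNegInvGlue.nonneg _)
  have hfx₀ : f x₀ ≠ 0 := by
    have : 0 < f x₀ := by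
      rw [hfdef]
      simp only [sub_self, norm_zero]
      exact mul_pos hε0 (expNegInvGlue.pos_of_pos (by norm_num; positivity))
    exact ne_of_gt this
  -- support facts
  have hsupp : Function.support f ⊆ Metric.ball x₀ r := by
    intro y hy
    have h1 : expNegInvGlue (r ^ 2 - ‖y - x₀‖ ^ 2) ≠ 0 := by
      intro h; exact hy (by rw [hfdef]; simp [h])
    have h2 : 0 < r ^ 2 - ‖y - x₀‖ ^ 2 := by
      by_contra h
      exact h1 (expNegInvGlue.zero_of_nonpos (by linarith))
    have h3 : ‖y - x₀‖ < r := by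
      have : ‖y - x₀‖ ^ 2 < r ^ 2 := by linarith
      exact lt_of_pow_lt_pow_left₀ 2 hr.le this
    exact mem_ball_iff_norm.2 h3
  have htsupp : tsupport f ⊆ Metric.closedBall x₀ r :=
    subset_trans (closure_mono hsupp) Metric.closure_ball_subset_closedBall
  -- continuity of laplacian and of rpow
  have hlapc : Continuous (laplacian f) := by
    unfold laplacian
    apply continuous_finset_sum
    intro i _
    have hfC2 : ContDiff ℝ (2 : ℕ) f := hfC.of_le (by norm_cast)
    exact (continuous_eval_const _).comp (hfC2.continuous_iteratedFDeriv (le_refl _))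
  have hrpowc : Continuous (fun x => f x ^ (3 - m)) :=
    hfC.continuous.rpow_const (fun x => Or.inr (by linarith))
  have hGoodClosed : IsClosed {x : EuclideanSpace ℝ (Fin n) |
      (m - 1) * laplacian f x ≤ f x ^ (3 - m)} :=
    isClosed_le (continuous_const.mul hlapc) hrpowc
  have hsub : {y : EuclideanSpace ℝ (Fin n) | r ^ 2 - ‖y - x₀‖ ^ 2 ≠ 0}
      ⊆ {x : EuclideanSpace ℝ (Fin n) | (m - 1) * laplacian f x ≤ f x ^ (3 - m)} := by
    intro x hx
    rcases lt_or_gt_of_ne hx with h | h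
    · -- r^2 - ‖x-x₀‖^2 < 0 : everything vanishes
      have hlap : laplacian f x = 0 := lap_neg x₀ r ε h
      have hfx : f x = 0 := by
        rw [hfdef]
        simp [expNegInvGlue.zero_of_nonpos (le_of_lt h)]
      simp only [mem_setOf_eq, hlap, hfx, mul_zero]
      rw [Real.zero_rpow (by intro hc; exact absurd hc (by intro h'; linarith))]
    · -- interior case
      have hx' : ‖x - x₀‖ ^ 2 < r ^ 2 := by linarith
      exact main_est x₀ hm2 hm3 hr hε0 hεK hx'
  have hall : ∀ x, (m - 1) * laplacian f x ≤ f x ^ (3 - m) := by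
    intro x
    have hd := (dense_ne x₀ hr).mono hsub
    have : x ∈ closure {x : EuclideanSpace ℝ (Fin n) |
        (m - 1) * laplacian f x ≤ f x ^ (3 - m)} := hd x
    rwa [hGoodClosed.closure_eq] at this
  refine ⟨f, hfC, ⟨x₀, hx₀Ω, hfx₀⟩, ?_, ?_, ?_, fun x _ => hall x⟩
  · -- bounds
    intro x hxΩ
    refine ⟨hfnonneg x, ?_⟩
    rcases le_or_gt (r ^ 2 - ‖x - x₀‖ ^ 2) 0 with h | h
    · have : f x = 0 := by rw [hfdef]; simp [expNegInvGlue.zero_of_nonpos h]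
      rw [this]
      exact le_min (hu₀nonneg x (subset_closure hxΩ)) one_pos.le
    · have hxcb : x ∈ Metric.closedBall x₀ r := by
        apply Metric.ball_subset_closedBall
        apply mem_ball_iff_norm.2
        exact lt_of_pow_lt_pow_left₀ 2 hr.le (by linarith)
      have h1 : f x ≤ ε := by
        rw [hfdef]
        calc ε * expNegInvGlue (r ^ 2 - ‖x - x₀‖ ^ 2) ≤ ε * 1 :=
              mul_le_mul_of_nonneg_left (expNegInvGlue_le_one _) hε0.le
          _ = ε := mul_one ε
      have h2 : ε ≤ min c 1 := min_le_left _ _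
      refine le_trans h1 (le_min ?_ ?_)
      · exact le_trans h2 (le_trans (min_le_left _ _) (hu₀W x hxcb).le)
      · exact le_trans h2 (min_le_right _ _)
  · -- compactness
    exact (isCompact_closedBall x₀ r).of_isClosed_subset (isClosed_tsupport f) htsupp
  · -- inside Ω
    exact subset_trans htsupp (subset_trans hcb inter_subset_right)
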